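/- Inverse expansion of monomials: x^n = Σ_{k=0}^{⌊n/2⌋} (qs)^k qbinomial(n,2k) [2k−1]_q!! H_{n−2k}(x,s,q). -/

import Mathlib

noncomputable section

/-- The q-integer `[n]_q = (1 - q^n)/(1 - q)`. -/
def qnat (q : ℝ) (n : ℕ) : ℝ := (1 - q ^ n) / (1 - q)

/-- The q-factorial `[n]_q!`. -/
def qfac (q : ℝ) (n : ℕ) : ℝ := ∏ j ∈ Finset.range n, qnat q (j + 1)

/-- The Gaussian binomial coefficient. -/
def qbinom (q : ℝ) (n k : ℕ) : ℝ := qfac q n / (qfac q k * qfac q (n - k))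

/-- The odd q-double factorial `[2k-1]_q!! = [1]_q [3]_q ⋯ [2k-1]_q`. -/
def qdf (q : ℝ) (k : ℕ) : ℝ := ∏ i ∈ Finset.range k, qnat q (2 * i + 1)

/-- The bivariate q-Hermite polynomial
`H n (x,s,q) = ∑_{2k ≤ n} (-s)^k q^(k²) qbinom(n,2k) [2k-1]_q!! x^(n-2k)`. -/
def qHermite (q s : ℝ) (n : ℕ) (x : ℝ) : ℝ :=
  ∑ k ∈ Finset.range (n / 2 + 1),
    (-s) ^ k * q ^ (k ^ 2) * qbinom q n (2 * k) * qdf q k * x ^ (n - 2 * k)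

end

section helpers
variable {q : ℝ} (hq : 0 < q) (hq1 : q < 1)
include hq hq1

lemma qnat_pos {n : ℕ} (hn : 1 ≤ n) : 0 < qnat q n := by
  have h1 : q ^ n < 1 := pow_lt_one₀ hq.le hq1 (by omega)
  exact div_pos (by linarith) (by linarith)

omit hq hq1 in
lemma qnat_add (hq1 : q ≠ 1) (a b : ℕ) : qnat q (a + b) = qnat q a + q ^ a * qnat q b := by
  unfold qnat
  have : 1 - q ≠ 0 := sub_ne_zero.mpr (by simpa using hq1.symm)
  field_simp
  rw [pow_add]
  ring

lemma qnat_one : qnat q 1 = 1 := by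
  unfold qnat
  rw [pow_one, div_self (sub_ne_zero.mpr (by linarith))]

lemma qfac_pos (n : ℕ) : 0 < qfac q n := by
  unfold qfac
  exact Finset.prod_pos fun i _ => qnat_pos hq hq1 (by omega)

omit hq hq1 in
lemma qfac_succ (n : ℕ) : qfac q (n + 1) = qfac q n * qnat q (n + 1) :=
  Finset.prod_range_succ _ _

omit hq hq1 in
lemma qfac_zero : qfac q 0 = 1 := Finset.prod_range_zero _

omit hq hq1 in
lemma qdf_succ (k : ℕ) : qdf q (k + 1) = qdf q k * qnat q (2 * k + 1) :=
  Finset.prod_range_succ _ _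

omit hq hq1 in
lemma qdf_zero : qdf q 0 = 1 := Finset.prod_range_zero _

lemma qbinom_zero (n : ℕ) : qbinom q n 0 = 1 := by
  unfold qbinom
  rw [Nat.sub_zero, qfac_zero, one_mul, div_self (qfac_pos hq hq1 n).ne']

lemma qbinom_self (n : ℕ) : qbinom q n n = 1 := by
  unfold qbinom
  rw [Nat.sub_self, qfac_zero, mul_one, div_self (qfac_pos hq hq1 n).ne']

lemma qbinom_pred (n : ℕ) : qbinom q (n + 1) n = qnat q (n + 1) := by
  unfold qbinom
  rw [Nat.add_sub_cancel_left, qfac_succ]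
  have h1 : qfac q 1 = 1 := by rw [show (1:ℕ) = 0 + 1 from rfl, qfac_succ, qfac_zero, one_mul, qnat_one hq hq1]
  rw [h1, mul_one, mul_comm, mul_div_assoc, div_self (qfac_pos hq hq1 n).ne', mul_one]

lemma qbinom_pascal {n k : ℕ} (hk : k < n) :
    qbinom q (n + 1) (k + 1) = qbinom q n (k + 1) + q ^ (n - k) * qbinom q n k := by
  unfold qbinom
  have h1 : n + 1 - (k + 1) = n - k := by omega
  have h2 : n - (k + 1) = n - k - 1 := by omega
  have h3 : n - k = n - k - 1 + 1 := by omega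
  rw [h1, h2, qfac_succ, h3, qfac_succ, qfac_succ]
  have key : qnat q (n + 1) = qnat q (n - k - 1 + 1) + q ^ (n - k - 1 + 1) * qnat q (k + 1) := by
    rw [← qnat_add (ne_of_lt hq1)]
    congr 1
    omega
  rw [key]
  have p1 := (qfac_pos hq hq1 n).ne'
  have p2 := (qfac_pos hq hq1 k).ne'
  have p3 := (qfac_pos hq hq1 (n - k - 1)).ne'
  have p4 := (qnat_pos hq hq1 (n := k + 1) (by omega)).ne'
  have p5 := (qnat_pos hq hq1 (n := n - k - 1 + 1) (by omega)).ne'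
  field_simp
  rw [Nat.add_sub_cancel, mul_div_assoc, div_self p3, mul_one]

lemma qbinom_absorb {m k : ℕ} (hk : k ≤ m) :
    qbinom q (m + 1) (k + 1) * qnat q (k + 1) = qnat q (m + 1) * qbinom q m k := by
  unfold qbinom
  have h1 : m + 1 - (k + 1) = m - k := by omega
  rw [h1, qfac_succ, qfac_succ]
  have p1 := (qfac_pos hq hq1 m).ne'
  have p2 := (qfac_pos hq hq1 k).ne'
  have p3 := (qfac_pos hq hq1 (m - k)).ne'
  have p4 := (qnat_pos hq hq1 (n := k + 1) (by omega)).ne'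
  field_simp

lemma qbinom_absorb2 {n k : ℕ} (hk : k < n) :
    qbinom q n (k + 1) * qnat q (k + 1) = qnat q (n - k) * qbinom q n k := by
  unfold qbinom
  obtain ⟨j, hj⟩ : ∃ j, n - k = j + 1 := ⟨n - k - 1, by omega⟩
  have h2 : n - (k + 1) = j := by omega
  rw [h2, hj, qfac_succ, qfac_succ]
  have p1 := (qfac_pos hq hq1 n).ne'
  have p2 := (qfac_pos hq hq1 k).ne'
  have p3 := (qfac_pos hq hq1 j).ne'
  have p4 := (qnat_pos hq hq1 (n := k + 1) (by omega)).ne'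
  have p5 := (qnat_pos hq hq1 (n := j + 1) (by omega)).ne'
  field_simp

lemma key1 {n i : ℕ} (h : 2 * i + 2 ≤ n) :
    q ^ ((i + 1) ^ 2) * qbinom q (n + 1) (2 * i + 2) * qdf q (i + 1)
      = q ^ ((i + 1) ^ 2) * qbinom q n (2 * i + 2) * qdf q (i + 1)
        + q ^ n * qnat q n * (q ^ (i ^ 2) * qbinom q (n - 1) (2 * i) * qdf q i) := by
  obtain ⟨m, rfl⟩ : ∃ m, n = m + 1 := ⟨n - 1, by omega⟩
  simp only [Nat.add_sub_cancel]
  have hp := qbinom_pascal hq hq1 (show 2 * i + 1 < m + 1 by omega)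
  have ha := qbinom_absorb hq hq1 (show 2 * i ≤ m by omega)
  have hd := qdf_succ (q := q) i
  have e1 : q ^ ((i + 1) ^ 2) * q ^ (m + 1 - (2 * i + 1)) = q ^ (m + 1) * q ^ (i ^ 2) := by
    rw [← pow_add, ← pow_add]
    congr 1
    have : (i + 1) ^ 2 = i ^ 2 + 2 * i + 1 := by ring
    omega
  rw [hd]
  rw [show 2 * i + 2 = 2 * i + 1 + 1 from rfl, hp]
  linear_combination (q ^ ((i + 1) ^ 2) * q ^ (m + 1 - (2 * i + 1)) * qdf q i) * ha
    + (qnat q (m + 1) * qbinom q m (2 * i) * qdf q i) * e1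

lemma key2 {n i : ℕ} (h : 2 * i + 2 ≤ n) :
    q ^ (i + 1) * qbinom q (n + 1) (2 * i + 2) * qdf q (i + 1)
      = q ^ (i + 1) * qbinom q n (2 * i + 2) * qdf q (i + 1)
        + q ^ (n - 2 * i) * qnat q (n - 2 * i) * (q ^ i * qbinom q n (2 * i) * qdf q i) := by
  have hp := qbinom_pascal hq hq1 (show 2 * i + 1 < n by omega)
  have ha := qbinom_absorb2 hq hq1 (show 2 * i < n by omega)
  have hd := qdf_succ (q := q) i
  have e1 : q ^ (i + 1) * q ^ (n - (2 * i + 1)) = q ^ (n - 2 * i) * q ^ i := by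
    rw [← pow_add, ← pow_add]
    congr 1
    omega
  have h2 : n - (2 * i + 1) + 1 = n - 2 * i := by omega
  rw [hd]
  rw [show 2 * i + 2 = 2 * i + 1 + 1 from rfl, hp]
  linear_combination (q ^ (i + 1) * q ^ (n - (2 * i + 1)) * qdf q i) * ha
    + (qnat q (n - 2 * i) * qbinom q n (2 * i) * qdf q i) * e1

end helpers

section main
variable {q : ℝ} (hq : 0 < q) (hq1 : q < 1)

/-- coefficient in qHermite -/
noncomputable def Ac (q s : ℝ) (n k : ℕ) : ℝ := (-s) ^ k * q ^ (k ^ 2) * qbinom q n (2 * k) * qdf q k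
/-- coefficient in expansion -/
noncomputable def Bc (q s : ℝ) (n k : ℕ) : ℝ := (q * s) ^ k * qbinom q n (2 * k) * qdf q k

lemma qHermite_eq (s x : ℝ) (n : ℕ) :
    qHermite q s n x = ∑ k ∈ Finset.range (n / 2 + 1), Ac q s n k * x ^ (n - 2 * k) := rfl

include hq hq1

lemma Ac_zero (s : ℝ) (n : ℕ) : Ac q s n 0 = 1 := by
  simp [Ac, qdf_zero, qbinom_zero hq hq1]

lemma Bc_zero (s : ℝ) (n : ℕ) : Bc q s n 0 = 1 := by
  simp [Bc, qdf_zero, qbinom_zero hq hq1]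

lemma keyA (s : ℝ) {i a b c : ℕ} (hb : b = a + 1) (hc : c = a + 2) (h : 2 * i + 2 ≤ b) :
    Ac q s c (i + 1) + s * q ^ b * qnat q b * Ac q s a i = Ac q s b (i + 1) := by
  subst hb hc
  have hk := key1 hq hq1 (n := a + 1) (i := i) (by omega)
  simp only [Nat.add_sub_cancel] at hk
  unfold Ac
  simp only [show 2 * (i + 1) = 2 * i + 2 from rfl]
  linear_combination ((-s) ^ (i + 1)) * hk

lemma keyB (s : ℝ) {i a b d : ℕ} (hb : b = a + 1) (hd : d = a - 2 * i) (h : 2 * i + 2 ≤ a) :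
    Bc q s b (i + 1) = Bc q s a (i + 1) + s * q ^ d * qnat q d * Bc q s a i := by
  subst hb hd
  have hk := key2 hq hq1 (n := a) (i := i) h
  unfold Bc
  simp only [show 2 * (i + 1) = 2 * i + 2 from rfl]
  linear_combination (s ^ (i + 1)) * hk

lemma edgeA (s : ℝ) {t a b c : ℕ} (ha : a = 2 * t) (hb : b = 2 * t + 1) (hc : c = 2 * t + 2) :
    Ac q s c (t + 1) + s * q ^ b * qnat q b * Ac q s a t = 0 := by
  subst ha hb hc
  unfold Ac
  simp only [show 2 * (t + 1) = 2 * t + 2 from rfl]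
  rw [qbinom_self hq hq1, qbinom_self hq hq1, qdf_succ]
  have e1 : q ^ ((t + 1) ^ 2) = q ^ (t ^ 2) * q ^ (2 * t + 1) := by
    rw [← pow_add]
    congr 1
    have : (t + 1) ^ 2 = t ^ 2 + 2 * t + 1 := by ring
    omega
  rw [e1]
  ring

lemma edgeB (s : ℝ) {t b c : ℕ} (hb : b = 2 * t + 1) (hc : c = 2 * t + 2) :
    s * q ^ 1 * qnat q 1 * Bc q s b t = Bc q s c (t + 1) := by
  subst hb hc
  unfold Bc
  simp only [show 2 * (t + 1) = 2 * t + 2 from rfl]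
  rw [qbinom_self hq hq1, qnat_one hq hq1, qdf_succ,
    show (2:ℕ) * t + 1 = (2 * t) + 1 from rfl, qbinom_pred hq hq1]
  ring

end main

section rec
variable {q : ℝ} (hq : 0 < q) (hq1 : q < 1)
include hq hq1

lemma qHermite_zero' (s x : ℝ) : qHermite q s 0 x = 1 := by
  rw [qHermite_eq]
  simp [Ac_zero hq hq1]

lemma qHermite_one' (s x : ℝ) : qHermite q s 1 x = x := by
  rw [qHermite_eq]
  simp [Ac_zero hq hq1]

omit hq hq1 in
lemma qnat_zero' : qnat q 0 = 0 := by simp [qnat]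

lemma qHermite_rec (s x : ℝ) (n : ℕ) :
    x * qHermite q s n x
      = qHermite q s (n + 1) x + s * q ^ n * qnat q n * qHermite q s (n - 1) x := by
  rcases Nat.even_or_odd n with ⟨t, ht⟩ | ⟨t, ht⟩
  · -- n = 2t (even)
    rcases Nat.eq_zero_or_pos t with rfl | htpos
    · have hn : n = 0 := by omega
      subst hn
      rw [qHermite_zero' hq hq1, qHermite_one' hq hq1]
      simp [qnat_zero']
    · obtain ⟨u, rfl⟩ : ∃ u, t = u + 1 := ⟨t - 1, by omega⟩
      have hn : n = 2 * u + 2 := by omega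
      subst hn
      rw [qHermite_eq, qHermite_eq, qHermite_eq]
      simp only [show (2 * u + 2) / 2 = u + 1 from by omega,
        show (2 * u + 2 + 1) / 2 = u + 1 from by omega,
        show (2 * u + 2 - 1) = 2 * u + 1 from by omega,
        show (2 * u + 1) / 2 = u from by omega]
      rw [Finset.mul_sum, Finset.mul_sum, ← sub_eq_iff_eq_add', ← Finset.sum_sub_distrib,
        Finset.sum_range_succ']
      conv_rhs => rw [← add_zero (∑ k ∈ Finset.range (u + 1),
        s * q ^ (2 * u + 2) * qnat q (2 * u + 2) * (Ac q s (2 * u + 1) k * x ^ (2 * u + 1 - 2 * k)))]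
      congr 1
      · refine Finset.sum_congr rfl fun i hi => ?_
        have hi' : i ≤ u := by simpa using Nat.lt_succ_iff.mp (Finset.mem_range.mp hi)
        rw [show 2 * u + 2 - 2 * (i + 1) = 2 * u - 2 * i from by omega,
          show 2 * u + 2 + 1 - 2 * (i + 1) = 2 * u + 1 - 2 * i from by omega,
          show 2 * u + 1 - 2 * i = (2 * u - 2 * i) + 1 from by omega, pow_succ]
        have hk := keyA hq hq1 s (a := 2 * u + 1) (b := 2 * u + 2) (c := 2 * u + 2 + 1)
          (i := i) rfl rfl (by omega)
        linear_combination (-(x ^ (2 * u - 2 * i) * x)) * hk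
      · rw [show 2 * u + 2 - 2 * 0 = 2 * u + 2 from by omega,
          show 2 * u + 2 + 1 - 2 * 0 = (2 * u + 2) + 1 from by omega, pow_succ,
          Ac_zero hq hq1, Ac_zero hq hq1]
        ring
  · -- n = 2t+1 (odd)
    have hn : n = 2 * t + 1 := by omega
    subst hn
    rw [qHermite_eq, qHermite_eq, qHermite_eq]
    simp only [show (2 * t + 1) / 2 = t from by omega,
      show (2 * t + 1 + 1) / 2 = t + 1 from by omega,
      show (2 * t + 1 - 1) = 2 * t from by omega,
      show (2 * t) / 2 = t from by omega]
    rw [Finset.mul_sum, Finset.mul_sum]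
    have hedge : Ac q s (2 * t + 1 + 1) (t + 1) * x ^ (2 * t + 1 + 1 - 2 * (t + 1))
        + s * q ^ (2 * t + 1) * qnat q (2 * t + 1)
          * (Ac q s (2 * t) t * x ^ (2 * t - 2 * t)) = 0 := by
      have he := edgeA hq hq1 s (t := t) rfl rfl rfl
      rw [show 2 * t + 1 + 1 - 2 * (t + 1) = 0 from by omega,
        show 2 * t - 2 * t = 0 from by omega]
      linear_combination he
    have hmain : (∑ k ∈ Finset.range (t + 1),
          x * (Ac q s (2 * t + 1) k * x ^ (2 * t + 1 - 2 * k)))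
        = (∑ k ∈ Finset.range (t + 1), Ac q s (2 * t + 1 + 1) k * x ^ (2 * t + 1 + 1 - 2 * k))
          + ∑ k ∈ Finset.range t,
            s * q ^ (2 * t + 1) * qnat q (2 * t + 1)
              * (Ac q s (2 * t) k * x ^ (2 * t - 2 * k)) := by
      rw [← sub_eq_iff_eq_add', ← Finset.sum_sub_distrib, Finset.sum_range_succ']
      conv_rhs => rw [← add_zero (∑ k ∈ Finset.range t,
        s * q ^ (2 * t + 1) * qnat q (2 * t + 1) * (Ac q s (2 * t) k * x ^ (2 * t - 2 * k)))]
      congr 1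
      · refine Finset.sum_congr rfl fun i hi => ?_
        have hi' : i < t := Finset.mem_range.mp hi
        obtain ⟨e, he⟩ : ∃ e, 2 * t - 2 * i = e + 1 := ⟨2 * t - 2 * i - 1, by omega⟩
        rw [show 2 * t + 1 - 2 * (i + 1) = e from by omega,
          show 2 * t + 1 + 1 - 2 * (i + 1) = e + 1 from by omega,
          show 2 * t - 2 * i = e + 1 from by omega, pow_succ, pow_succ]
        have hk := keyA hq hq1 s (a := 2 * t) (b := 2 * t + 1) (c := 2 * t + 1 + 1)
          (i := i) rfl rfl (by omega)
        linear_combination (-(x ^ e * x)) * hk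
      · rw [show 2 * t + 1 - 2 * 0 = 2 * t + 1 from by omega,
          show 2 * t + 1 + 1 - 2 * 0 = (2 * t + 1) + 1 from by omega, pow_succ,
          Ac_zero hq hq1, Ac_zero hq hq1]
        ring
    rw [Finset.sum_range_succ
        (f := fun k => Ac q s (2 * t + 1 + 1) k * x ^ (2 * t + 1 + 1 - 2 * k)) (n := t + 1),
      Finset.sum_range_succ
        (f := fun k => s * q ^ (2 * t + 1) * qnat q (2 * t + 1)
          * (Ac q s (2 * t) k * x ^ (2 * t - 2 * k))) (n := t)]
    linear_combination hmain - hedge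

end rec

theorem monomial_expansion_qHermite (q : ℝ) (hq : 0 < q) (hq1 : q < 1) (s x : ℝ) (n : ℕ) :
    x ^ n = ∑ k ∈ Finset.range (n / 2 + 1),
      (q * s) ^ k * qbinom q n (2 * k) * qdf q k * qHermite q s (n - 2 * k) x := by
  have hB : ∀ m : ℕ, (∑ k ∈ Finset.range (m / 2 + 1),
      (q * s) ^ k * qbinom q m (2 * k) * qdf q k * qHermite q s (m - 2 * k) x)
      = ∑ k ∈ Finset.range (m / 2 + 1), Bc q s m k * qHermite q s (m - 2 * k) x := fun m => rfl
  induction n with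
  | zero =>
    rw [hB]
    simp [Bc_zero hq hq1, qHermite_zero' hq hq1]
  | succ n ih =>
    rw [hB, pow_succ, ih, hB, Finset.sum_mul]
    have hstep : ∀ k ∈ Finset.range (n / 2 + 1),
        Bc q s n k * qHermite q s (n - 2 * k) x * x
          = Bc q s n k * qHermite q s (n - 2 * k + 1) x
            + s * q ^ (n - 2 * k) * qnat q (n - 2 * k)
              * (Bc q s n k * qHermite q s (n - 2 * k - 1) x) := by
      intro k hk
      have hr := qHermite_rec hq hq1 s x (n - 2 * k)
      linear_combination (Bc q s n k) * hr
    rw [Finset.sum_congr rfl hstep, Finset.sum_add_distrib]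
    rcases Nat.even_or_odd n with ⟨t, ht⟩ | ⟨t, ht⟩
    · -- n = 2t even
      have hn : n = 2 * t := by omega
      subst hn
      simp only [show (2 * t) / 2 = t from by omega, show (2 * t + 1) / 2 = t from by omega]
      have h0 : s * q ^ (2 * t - 2 * t) * qnat q (2 * t - 2 * t)
          * (Bc q s (2 * t) t * qHermite q s (2 * t - 2 * t - 1) x) = 0 := by
        rw [show 2 * t - 2 * t = 0 from by omega, qnat_zero']
        ring
      rw [Finset.sum_range_succ
        (f := fun k => s * q ^ (2 * t - 2 * k) * qnat q (2 * t - 2 * k)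
          * (Bc q s (2 * t) k * qHermite q s (2 * t - 2 * k - 1) x)) (n := t), h0, add_zero]
      have hmain : (∑ k ∈ Finset.range (t + 1),
            Bc q s (2 * t + 1) k * qHermite q s (2 * t + 1 - 2 * k) x)
          = (∑ k ∈ Finset.range (t + 1),
              Bc q s (2 * t) k * qHermite q s (2 * t - 2 * k + 1) x)
            + ∑ k ∈ Finset.range t, s * q ^ (2 * t - 2 * k) * qnat q (2 * t - 2 * k)
              * (Bc q s (2 * t) k * qHermite q s (2 * t - 2 * k - 1) x) := by
        rw [← sub_eq_iff_eq_add', ← Finset.sum_sub_distrib, Finset.sum_range_succ']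
        conv_rhs => rw [← add_zero (∑ k ∈ Finset.range t,
          s * q ^ (2 * t - 2 * k) * qnat q (2 * t - 2 * k)
            * (Bc q s (2 * t) k * qHermite q s (2 * t - 2 * k - 1) x))]
        congr 1
        · refine Finset.sum_congr rfl fun i hi => ?_
          have hi' : i < t := Finset.mem_range.mp hi
          rw [show 2 * t + 1 - 2 * (i + 1) = 2 * t - 2 * i - 1 from by omega,
            show 2 * t - 2 * (i + 1) + 1 = 2 * t - 2 * i - 1 from by omega]
          have hk := keyB hq hq1 s (a := 2 * t) (b := 2 * t + 1) (d := 2 * t - 2 * i)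
            (i := i) rfl rfl (by omega)
          linear_combination (qHermite q s (2 * t - 2 * i - 1) x) * hk
        · rw [show 2 * t + 1 - 2 * 0 = 2 * t + 1 from by omega,
            show 2 * t - 2 * 0 + 1 = 2 * t + 1 from by omega,
            Bc_zero hq hq1, Bc_zero hq hq1]
          ring
      linear_combination -hmain
    · -- n = 2t+1 odd
      have hn : n = 2 * t + 1 := by omega
      subst hn
      simp only [show (2 * t + 1) / 2 = t from by omega,
        show (2 * t + 1 + 1) / 2 = t + 1 from by omega]
      have hedge2 : s * q ^ (2 * t + 1 - 2 * t) * qnat q (2 * t + 1 - 2 * t)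
          * (Bc q s (2 * t + 1) t * qHermite q s (2 * t + 1 - 2 * t - 1) x)
          = Bc q s (2 * t + 1 + 1) (t + 1) * qHermite q s (2 * t + 1 + 1 - 2 * (t + 1)) x := by
        rw [show 2 * t + 1 - 2 * t - 1 = 0 from by omega,
          show 2 * t + 1 - 2 * t = 1 from by omega,
          show 2 * t + 1 + 1 - 2 * (t + 1) = 0 from by omega]
        have he := edgeB hq hq1 s (t := t) (b := 2 * t + 1) (c := 2 * t + 1 + 1) rfl (by omega)
        linear_combination (qHermite q s 0 x) * he
      have hmain : (∑ k ∈ Finset.range (t + 1),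
            Bc q s (2 * t + 1 + 1) k * qHermite q s (2 * t + 1 + 1 - 2 * k) x)
          = (∑ k ∈ Finset.range (t + 1),
              Bc q s (2 * t + 1) k * qHermite q s (2 * t + 1 - 2 * k + 1) x)
            + ∑ k ∈ Finset.range t, s * q ^ (2 * t + 1 - 2 * k) * qnat q (2 * t + 1 - 2 * k)
              * (Bc q s (2 * t + 1) k * qHermite q s (2 * t + 1 - 2 * k - 1) x) := by
        rw [← sub_eq_iff_eq_add', ← Finset.sum_sub_distrib, Finset.sum_range_succ']
        conv_rhs => rw [← add_zero (∑ k ∈ Finset.range t,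
          s * q ^ (2 * t + 1 - 2 * k) * qnat q (2 * t + 1 - 2 * k)
            * (Bc q s (2 * t + 1) k * qHermite q s (2 * t + 1 - 2 * k - 1) x))]
        congr 1
        · refine Finset.sum_congr rfl fun i hi => ?_
          have hi' : i < t := Finset.mem_range.mp hi
          rw [show 2 * t + 1 - 2 * i - 1 = 2 * t - 2 * i from by omega,
            show 2 * t + 1 + 1 - 2 * (i + 1) = 2 * t - 2 * i from by omega,
            show 2 * t + 1 - 2 * (i + 1) + 1 = 2 * t - 2 * i from by omega]
          have hk := keyB hq hq1 s (a := 2 * t + 1) (b := 2 * t + 1 + 1)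
            (d := 2 * t + 1 - 2 * i) (i := i) rfl rfl (by omega)
          linear_combination (qHermite q s (2 * t - 2 * i) x) * hk
        · rw [show 2 * t + 1 + 1 - 2 * 0 = 2 * t + 2 from by omega,
            show 2 * t + 1 - 2 * 0 + 1 = 2 * t + 2 from by omega,
            Bc_zero hq hq1, Bc_zero hq hq1]
          ring
      rw [Finset.sum_range_succ
          (f := fun k => Bc q s (2 * t + 1 + 1) k * qHermite q s (2 * t + 1 + 1 - 2 * k) x)
          (n := t + 1),
        Finset.sum_range_succ
          (f := fun k => s * q ^ (2 * t + 1 - 2 * k) * qnat q (2 * t + 1 - 2 * k)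
            * (Bc q s (2 * t + 1) k * qHermite q s (2 * t + 1 - 2 * k - 1) x)) (n := t)]
      linear_combination hedge2 - hmain
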